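/- arXiv:2310.10246 — 8 statements merged into one kernel-verified Lean document; each statement's English description precedes it below -/
import Mathlib

section
/- Let Λ₁ be a K₁-approximate subgroup and Λ₂ a K₂-approximate subgroup of a group G, and let k₁, k₂ ≥ 2 be integers. Then there is a finite set F ⊆ G with |F| ≤ K₁^{k₁−1}·K₂^{k₂−1} such that Λ₁^{k₁} ∩ Λ₂^{k₂} ⊆ F·(Λ₁² ∩ Λ₂²). -/
open Pointwise

def IsKApproxSubgroup {G : Type*} [Group G] (K : ℕ) (Λ : Set G) : Prop :=
  (1 : G) ∈ Λ ∧ Λ⁻¹ = Λ ∧ ∃ F : Finset G, F.card ≤ K ∧ Λ * Λ ⊆ ↑F * Λ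

lemma aux_pow_cover {G : Type*} [Group G] {K : ℕ} {Λ : Set G} {F : Finset G}
    (hF : F.card ≤ K) (h : Λ * Λ ⊆ ↑F * Λ) :
    ∀ k, 1 ≤ k → ∃ S : Finset G, S.card ≤ K ^ (k - 1) ∧ Λ ^ k ⊆ ↑S * Λ := by
  intro k hk
  induction k, hk using Nat.le_induction with
  | base => exact ⟨{1}, by simp, by simp [pow_one]⟩
  | succ n hn ih =>
    classical
    obtain ⟨S, hScard, hS⟩ := ih
    refine ⟨S * F, ?_, ?_⟩
    · simp only [Nat.add_sub_cancel]
      calc (S * F).card ≤ S.card * F.card := Finset.card_mul_le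
        _ ≤ K ^ (n - 1) * K := Nat.mul_le_mul hScard hF
        _ = K ^ n := by rw [← pow_succ]; congr 1; omega
    · rw [pow_succ]
      calc Λ ^ n * Λ ⊆ (↑S * Λ) * Λ := Set.mul_subset_mul_right hS
        _ = ↑S * (Λ * Λ) := by rw [mul_assoc]
        _ ⊆ ↑S * (↑F * Λ) := Set.mul_subset_mul_left h
        _ = ↑(S * F) * Λ := by rw [Finset.coe_mul, mul_assoc]

theorem stmt1 {G : Type*} [Group G] (K₁ K₂ k₁ k₂ : ℕ) (Λ₁ Λ₂ : Set G)
    (hk₁ : 2 ≤ k₁) (hk₂ : 2 ≤ k₂)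
    (h1 : IsKApproxSubgroup K₁ Λ₁) (h2 : IsKApproxSubgroup K₂ Λ₂) :
    ∃ F : Finset G, F.card ≤ K₁ ^ (k₁ - 1) * K₂ ^ (k₂ - 1) ∧
      Λ₁ ^ k₁ ∩ Λ₂ ^ k₂ ⊆ ↑F * (Λ₁ ^ 2 ∩ Λ₂ ^ 2) := by
  classical
  obtain ⟨-, hinv₁, F₁, hF₁, hmul₁⟩ := h1
  obtain ⟨-, hinv₂, F₂, hF₂, hmul₂⟩ := h2
  obtain ⟨S₁, hS₁card, hS₁⟩ := aux_pow_cover hF₁ hmul₁ k₁ (by omega)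
  obtain ⟨S₂, hS₂card, hS₂⟩ := aux_pow_cover hF₂ hmul₂ k₂ (by omega)
  set P : G × G → Prop := fun p =>
    ∃ x, (∃ a ∈ Λ₁, x = p.1 * a) ∧ ∃ b ∈ Λ₂, x = p.2 * b with hP
  set f : G × G → G := fun p => if h : P p then h.choose else 1 with hf
  refine ⟨(S₁ ×ˢ S₂).image f, ?_, ?_⟩
  · calc ((S₁ ×ˢ S₂).image f).card ≤ (S₁ ×ˢ S₂).card := Finset.card_image_le
      _ = S₁.card * S₂.card := Finset.card_product _ _
      _ ≤ K₁ ^ (k₁ - 1) * K₂ ^ (k₂ - 1) := Nat.mul_le_mul hS₁card hS₂card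
  · rintro x ⟨hx₁, hx₂⟩
    obtain ⟨s₁, hs₁, a, ha, hxa⟩ := hS₁ hx₁
    obtain ⟨s₂, hs₂, b, hb, hxb⟩ := hS₂ hx₂
    have hPp : P (s₁, s₂) := ⟨x, ⟨a, ha, hxa.symm⟩, ⟨b, hb, hxb.symm⟩⟩
    set x₀ := f (s₁, s₂) with hx₀
    have hx₀spec : (∃ a ∈ Λ₁, x₀ = s₁ * a) ∧ ∃ b ∈ Λ₂, x₀ = s₂ * b := by
      rw [hx₀, hf]; simp only [dif_pos hPp]; exact hPp.choose_spec
    obtain ⟨⟨a₀, ha₀, hxa₀⟩, b₀, hb₀, hxb₀⟩ := hx₀spec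
    refine ⟨x₀, ?_, x₀⁻¹ * x, ⟨?_, ?_⟩, by group⟩
    · exact Finset.mem_coe.mpr
        (Finset.mem_image.mpr ⟨(s₁, s₂), Finset.mem_product.mpr ⟨hs₁, hs₂⟩, rfl⟩)
    · have heq : x₀⁻¹ * x = a₀⁻¹ * a := by rw [hxa₀, ← hxa]; group
      rw [heq, sq]
      exact Set.mul_mem_mul (by rw [← hinv₁]; simpa using ha₀) ha
    · have heq : x₀⁻¹ * x = b₀⁻¹ * b := by rw [hxb₀, ← hxb]; group
      rw [heq, sq]
      exact Set.mul_mem_mul (by rw [← hinv₂]; simpa using hb₀) hb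
end

section
/- If Λ₁ is a K₁-approximate subgroup and Λ₂ a K₂-approximate subgroup of a group G, and k₁, k₂ ≥ 2 are integers, then Λ₁^{k₁} ∩ Λ₂^{k₂} is a K₁^{2k₁−1}·K₂^{2k₂−1}-approximate subgroup of G. -/
open Pointwise

lemma pow_cover {G : Type*} [Group G] (Λ F : Set G) (h : Λ * Λ ⊆ F * Λ) :
    ∀ m, Λ ^ (m + 1) ⊆ F ^ m * Λ := by
  intro m
  induction m with
  | zero => simp
  | succ m ih =>
    calc Λ ^ (m + 2) = Λ ^ (m + 1) * Λ := by rw [pow_succ]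
    _ ⊆ (F ^ m * Λ) * Λ := Set.mul_subset_mul_right ih
    _ = F ^ m * (Λ * Λ) := by rw [mul_assoc]
    _ ⊆ F ^ m * (F * Λ) := Set.mul_subset_mul_left h
    _ = F ^ (m + 1) * Λ := by rw [← mul_assoc, ← pow_succ]

theorem stmt2 {G : Type*} [Group G] (K₁ K₂ k₁ k₂ : ℕ) (Λ₁ Λ₂ : Set G)
    (hk₁ : 2 ≤ k₁) (hk₂ : 2 ≤ k₂)
    (h1 : IsKApproxSubgroup K₁ Λ₁) (h2 : IsKApproxSubgroup K₂ Λ₂) :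
    IsKApproxSubgroup (K₁ ^ (2 * k₁ - 1) * K₂ ^ (2 * k₂ - 1)) (Λ₁ ^ k₁ ∩ Λ₂ ^ k₂) := by
  obtain ⟨h1e, h1i, F₁, hF₁c, hF₁⟩ := h1
  obtain ⟨h2e, h2i, F₂, hF₂c, hF₂⟩ := h2
  refine ⟨⟨Set.one_mem_pow h1e, Set.one_mem_pow h2e⟩, ?_, ?_⟩
  · rw [Set.inter_inv, ← inv_pow, ← inv_pow, h1i, h2i]
  · classical
    set g : G × G → G := fun p =>
      if h : ({p.1} * Λ₁ ∩ ({p.2} * Λ₂) : Set G).Nonempty then h.choose else 1 with hg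
    refine ⟨((F₁ ^ (2 * k₁ - 1)) ×ˢ (F₂ ^ (2 * k₂ - 1))).image g, ?_, ?_⟩
    · calc _ ≤ ((F₁ ^ (2 * k₁ - 1)) ×ˢ (F₂ ^ (2 * k₂ - 1))).card := Finset.card_image_le
      _ = (F₁ ^ (2 * k₁ - 1)).card * (F₂ ^ (2 * k₂ - 1)).card := Finset.card_product _ _
      _ ≤ K₁ ^ (2 * k₁ - 1) * K₂ ^ (2 * k₂ - 1) := by
          gcongr <;> exact Finset.card_pow_le.trans (by gcongr)
    · intro x hx
      have hx1 : x ∈ Λ₁ ^ (2 * k₁) := by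
        have : Λ₁ ^ k₁ * Λ₁ ^ k₁ = Λ₁ ^ (2 * k₁) := by rw [← pow_add, two_mul]
        rw [← this]
        exact Set.mul_subset_mul (fun y hy => hy.1) (fun y hy => hy.1) hx
      have hx2 : x ∈ Λ₂ ^ (2 * k₂) := by
        have : Λ₂ ^ k₂ * Λ₂ ^ k₂ = Λ₂ ^ (2 * k₂) := by rw [← pow_add, two_mul]
        rw [← this]
        exact Set.mul_subset_mul (fun y hy => hy.2) (fun y hy => hy.2) hx
      have e1 : 2 * k₁ = (2 * k₁ - 1) + 1 := by omega
      have e2 : 2 * k₂ = (2 * k₂ - 1) + 1 := by omega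
      rw [e1] at hx1; rw [e2] at hx2
      have hx1' := pow_cover Λ₁ (↑F₁) hF₁ _ hx1
      have hx2' := pow_cover Λ₂ (↑F₂) hF₂ _ hx2
      obtain ⟨f₁, hf₁, a, ha, hfa⟩ := hx1'
      obtain ⟨f₂, hf₂, b, hb, hfb⟩ := hx2'
      have hne : ({f₁} * Λ₁ ∩ ({f₂} * Λ₂) : Set G).Nonempty :=
        ⟨x, ⟨f₁, rfl, a, ha, hfa⟩, ⟨f₂, rfl, b, hb, hfb⟩⟩
      have hgspec : g (f₁, f₂) ∈ ({f₁} * Λ₁ ∩ ({f₂} * Λ₂) : Set G) := by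
        rw [hg]; simp only [dif_pos hne]; exact hne.choose_spec
      obtain ⟨⟨f₁', hf₁', a', ha', hea⟩, ⟨f₂', hf₂', b', hb', heb⟩⟩ := hgspec
      rw [Set.mem_singleton_iff] at hf₁' hf₂'
      rw [hf₁'] at hea
      rw [hf₂'] at heb
      set e := g (f₁, f₂) with he
      refine ⟨e, ?_, e⁻¹ * x, ⟨?_, ?_⟩, by group⟩
      · apply Finset.mem_coe.2
        apply Finset.mem_image_of_mem
        rw [Finset.mem_product]
        constructor
        · rw [← Finset.coe_pow] at hf₁; exact_mod_cast hf₁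
        · rw [← Finset.coe_pow] at hf₂; exact_mod_cast hf₂
      · have : e⁻¹ * x = a'⁻¹ * a := by rw [← hea, ← hfa]; group
        rw [this]
        have hmem : a'⁻¹ * a ∈ Λ₁ * Λ₁ := by
          refine Set.mul_mem_mul ?_ ha
          rw [← h1i]; exact Set.inv_mem_inv.2 ha'
        have : Λ₁ * Λ₁ = Λ₁ ^ 2 := (sq Λ₁).symm
        exact Set.pow_subset_pow_right h1e hk₁ (this ▸ hmem)
      · have : e⁻¹ * x = b'⁻¹ * b := by rw [← heb, ← hfb]; group
        rw [this]
        have hmem : b'⁻¹ * b ∈ Λ₂ * Λ₂ := by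
          refine Set.mul_mem_mul ?_ hb
          rw [← h2i]; exact Set.inv_mem_inv.2 hb'
        have : Λ₂ * Λ₂ = Λ₂ ^ 2 := (sq Λ₂).symm
        exact Set.pow_subset_pow_right h2e hk₂ (this ▸ hmem)
end

section
/- Let X, Y₁, …, Yₙ be subsets of a group G and suppose there exist finite sets F₁, …, Fₙ ⊆ G with X ⊆ Fᵢ·Yᵢ for all i. Then there exists F′ ⊆ X with |F′| ≤ |F₁|·⋯·|Fₙ| such that X ⊆ F′·(Y₁⁻¹Y₁ ∩ ⋯ ∩ Yₙ⁻¹Yₙ). -/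
open Pointwise

theorem stmt4 {G : Type*} [Group G] (n : ℕ) (X : Set G) (Y F : Fin n → Set G)
    (hF : ∀ i, (F i).Finite) (hXF : ∀ i, X ⊆ F i * Y i) :
    ∃ F' : Set G, F' ⊆ X ∧ F'.Finite ∧ F'.ncard ≤ ∏ i, (F i).ncard ∧
      X ⊆ F' * ⋂ i, (Y i)⁻¹ * Y i := by
  classical
  -- choose for each x ∈ X a tuple f x with f x i ∈ F i and (f x i)⁻¹ * x ∈ Y i
  have hch : ∀ x : X, ∀ i, ∃ a, a ∈ F i ∧ a⁻¹ * (x : G) ∈ Y i := by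
    rintro ⟨x, hx⟩ i
    obtain ⟨a, ha, y, hy, hxy⟩ := hXF i hx
    exact ⟨a, ha, by simpa [← hxy] using hy⟩
  choose f hf1 hf2 using hch
  set S : Set (Fin n → G) := Set.range f with hS
  have hSsub : S ⊆ Set.pi Set.univ F := by
    rintro _ ⟨x, rfl⟩ i _
    exact hf1 x i
  have hpiFin : (Set.pi Set.univ F).Finite := Set.Finite.pi hF
  have hSfin : S.Finite := hpiFin.subset hSsub
  have hr : ∀ s : S, ∃ x : X, f x = (s : Fin n → G) := fun s => s.2
  choose r hrr using hr
  refine ⟨Set.range (fun s : S => (r s : G)), ?_, ?_, ?_, ?_⟩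
  · rintro _ ⟨s, rfl⟩; exact (r s).2
  · haveI := hSfin.to_subtype
    exact Set.finite_range _
  · haveI := hSfin.to_subtype
    calc (Set.range (fun s : S => (r s : G))).ncard
        = Nat.card (Set.range (fun s : S => (r s : G))) :=
          (Nat.card_coe_set_eq _).symm
      _ ≤ Nat.card S := Nat.card_le_card_of_surjective _ Set.rangeFactorization_surjective
      _ = S.ncard := Nat.card_coe_set_eq _
      _ ≤ (Set.pi Set.univ F).ncard := Set.ncard_le_ncard hSsub hpiFin
      _ = Nat.card (Set.pi Set.univ F) := (Nat.card_coe_set_eq _).symm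
      _ = Nat.card (∀ i, F i) := Nat.card_congr (Equiv.Set.univPi F)
      _ = ∏ i, Nat.card (F i) := Nat.card_pi
      _ = ∏ i, (F i).ncard := by
          exact Finset.prod_congr rfl fun i _ => Nat.card_coe_set_eq _
  · intro x hx
    set s : S := ⟨f ⟨x, hx⟩, Set.mem_range_self _⟩ with hs
    set x' : G := (r s : G) with hx'
    refine ⟨x', Set.mem_range_self s, x'⁻¹ * x, ?_, by group⟩
    refine Set.mem_iInter.2 fun i => ?_
    have ht : f (r s) = f ⟨x, hx⟩ := hrr s
    have h1 : (f ⟨x, hx⟩ i)⁻¹ * x' ∈ Y i := by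
      have := hf2 (r s) i
      rwa [ht] at this
    have h2 : (f ⟨x, hx⟩ i)⁻¹ * x ∈ Y i := hf2 ⟨x, hx⟩ i
    have : x'⁻¹ * x = ((f ⟨x, hx⟩ i)⁻¹ * x')⁻¹ * ((f ⟨x, hx⟩ i)⁻¹ * x) := by group
    rw [this]
    exact ⟨_, Set.inv_mem_inv.2 h1, _, h2, rfl⟩
end

section
/- Let Λ be a uniform approximate lattice in a locally compact group G and let H₁, H₂ be closed subgroups such that Λ² ∩ Hᵢ is a uniform approximate lattice in Hᵢ for i = 1, 2. Then Λ² ∩ H₁ ∩ H₂ is a uniform approximate lattice in H₁ ∩ H₂. -/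
open Pointwise

def IsApproxSubgroup {G : Type*} [Group G] (Λ : Set G) : Prop :=
  (1 : G) ∈ Λ ∧ Λ⁻¹ = Λ ∧ ∃ F : Set G, F.Finite ∧ Λ * Λ ⊆ F * Λ

def UniformlyDiscrete {G : Type*} [Group G] [TopologicalSpace G] (Λ : Set G) : Prop :=
  ∃ U ∈ nhds (1 : G), Λ⁻¹ * Λ ∩ U = {1}

/-- `Λ` is a uniform approximate lattice in the closed subset `H` of the ambient group. -/
def IsUniformApproxLatticeIn {G : Type*} [Group G] [TopologicalSpace G] (Λ H : Set G) : Prop :=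
  Λ ⊆ H ∧ IsApproxSubgroup Λ ∧ UniformlyDiscrete Λ ∧ ∃ K : Set G, IsCompact K ∧ H ⊆ Λ * K

/-- A "uniformly separated" set meets every compact set in a finite set. -/
lemma sep_inter_compact_finite {G : Type*} [Group G] [TopologicalSpace G] [IsTopologicalGroup G]
    {D C U : Set G} (hU : U ∈ nhds (1:G)) (hD : ∀ a ∈ D, ∀ b ∈ D, a⁻¹ * b ∈ U → a = b)
    (hC : IsCompact C) : (D ∩ C).Finite := by
  obtain ⟨V, hVopen, hV1, hVV⟩ := exists_open_nhds_one_mul_subset hU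
  set W : Set G := V ∩ V⁻¹ with hW
  have hWopen : IsOpen W := hVopen.inter hVopen.inv
  have hW1 : (1:G) ∈ W := ⟨hV1, by simpa using hV1⟩
  have hWW : ∀ a ∈ W, ∀ b ∈ W, a⁻¹ * b ∈ U := by
    intro a ha b hb
    exact hVV (Set.mul_mem_mul (by simpa using ha.2) hb.1)
  obtain ⟨t, -, htcov⟩ := hC.elim_nhds_subcover (fun x => x • W)
    (fun x _ => (hWopen.smul x).mem_nhds ⟨1, hW1, mul_one x⟩)
  have hsub : D ∩ C ⊆ ⋃ x ∈ t, D ∩ x • W := by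
    intro y ⟨hyD, hyC⟩
    obtain ⟨x, hxt, hyx⟩ := Set.mem_iUnion₂.1 (htcov hyC)
    exact Set.mem_iUnion₂.2 ⟨x, hxt, hyD, hyx⟩
  refine Set.Finite.subset (Set.Finite.biUnion t.finite_toSet fun x _ => ?_) hsub
  apply Set.Subsingleton.finite
  rintro a ⟨haD, wa, hwa, rfl⟩ b ⟨hbD, wb, hwb, rfl⟩
  have : (x * wa)⁻¹ * (x * wb) ∈ U := by
    have := hWW wa hwa wb hwb
    simpa [mul_assoc] using this
  exact hD _ haD _ hbD this

/-- Left covering lemma: A ⊆ F * B with F finite gives A ∩ H ⊆ F₀ * ((B⁻¹*B) ∩ H). -/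
lemma cover_left {G : Type*} [Group G] (A B : Set G) (H : Subgroup G) (F : Set G)
    (hF : F.Finite) (hAF : A ⊆ F * B) :
    ∃ F₀ : Set G, F₀.Finite ∧ A ∩ (H : Set G) ⊆ F₀ * ((B⁻¹ * B) ∩ (H : Set G)) := by
  classical
  have pick : ∀ f : G, ∃ z : G, (A ∩ (H:Set G) ∩ ({f} * B)).Nonempty →
      z ∈ A ∩ (H:Set G) ∩ ({f} * B) := by
    intro f
    by_cases h : (A ∩ (H:Set G) ∩ ({f} * B)).Nonempty
    · exact ⟨h.choose, fun _ => h.choose_spec⟩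
    · exact ⟨1, fun hc => absurd hc h⟩
  choose z hz using pick
  refine ⟨z '' F, hF.image z, ?_⟩
  rintro y ⟨hyA, hyH⟩
  obtain ⟨f, hfF, b, hbB, hy⟩ := hAF hyA
  have hne : (A ∩ (H:Set G) ∩ ({f} * B)).Nonempty :=
    ⟨y, ⟨hyA, hyH⟩, ⟨f, rfl, b, hbB, hy⟩⟩
  obtain ⟨⟨hzA, hzH⟩, f1, hf1, b', hb'B, hzeq⟩ := hz f hne
  rw [Set.mem_singleton_iff] at hf1
  rw [hf1] at hzeq
  have hzeq' : f * b' = z f := hzeq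
  refine ⟨z f, ⟨f, hfF, rfl⟩, (z f)⁻¹ * y, ⟨?_, H.mul_mem (H.inv_mem hzH) hyH⟩, by group⟩
  have h2 : (z f)⁻¹ * y = b'⁻¹ * b := by rw [← hzeq', ← hy]; group
  rw [h2]
  exact Set.mul_mem_mul (Set.inv_mem_inv.2 hb'B) hbB

/-- Right covering lemma. -/
lemma cover_right {G : Type*} [Group G] (A B : Set G) (H : Subgroup G) (F : Set G)
    (hF : F.Finite) (hAF : A ⊆ B * F) :
    ∃ F₀ : Set G, F₀.Finite ∧ A ∩ (H : Set G) ⊆ ((B * B⁻¹) ∩ (H : Set G)) * F₀ := by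
  classical
  have pick : ∀ f : G, ∃ z : G, (A ∩ (H:Set G) ∩ (B * {f})).Nonempty →
      z ∈ A ∩ (H:Set G) ∩ (B * {f}) := by
    intro f
    by_cases h : (A ∩ (H:Set G) ∩ (B * {f})).Nonempty
    · exact ⟨h.choose, fun _ => h.choose_spec⟩
    · exact ⟨1, fun hc => absurd hc h⟩
  choose z hz using pick
  refine ⟨z '' F, hF.image z, ?_⟩
  rintro y ⟨hyA, hyH⟩
  obtain ⟨b, hbB, f, hfF, hy⟩ := hAF hyA
  have hne : (A ∩ (H:Set G) ∩ (B * {f})).Nonempty :=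
    ⟨y, ⟨hyA, hyH⟩, ⟨b, hbB, f, rfl, hy⟩⟩
  obtain ⟨⟨hzA, hzH⟩, b', hb'B, f1, hf1, hzeq⟩ := hz f hne
  rw [Set.mem_singleton_iff] at hf1
  rw [hf1] at hzeq
  have hzeq' : b' * f = z f := hzeq
  refine ⟨y * (z f)⁻¹, ⟨?_, H.mul_mem hyH (H.inv_mem hzH)⟩, z f, ⟨f, hfF, rfl⟩, by group⟩
  have h2 : y * (z f)⁻¹ = b * b'⁻¹ := by rw [← hzeq', ← hy]; group
  rw [h2]
  exact Set.mul_mem_mul hbB (Set.inv_mem_inv.2 hb'B)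

theorem stmt8 {G : Type*} [Group G] [TopologicalSpace G] [IsTopologicalGroup G]
    [LocallyCompactSpace G] (Λ : Set G) (H₁ H₂ : Subgroup G)
    (hH₁ : IsClosed (H₁ : Set G)) (hH₂ : IsClosed (H₂ : Set G))
    (hΛ : IsUniformApproxLatticeIn Λ Set.univ)
    (h1 : IsUniformApproxLatticeIn (Λ * Λ ∩ (H₁ : Set G)) (H₁ : Set G))
    (h2 : IsUniformApproxLatticeIn (Λ * Λ ∩ (H₂ : Set G)) (H₂ : Set G)) :
    IsUniformApproxLatticeIn (Λ * Λ ∩ ((H₁ : Set G) ∩ (H₂ : Set G)))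
      ((H₁ : Set G) ∩ (H₂ : Set G)) := by

  classical
  obtain ⟨-, ⟨h1Λ, hsym, F, hFfin, hFΛ⟩, ⟨U₀, hU₀, hdisc₀⟩, -⟩ := hΛ
  obtain ⟨-, -, ⟨U₁, hU₁, hdisc₁⟩, K₁, hK₁, hdense₁⟩ := h1
  obtain ⟨-, -, -, K₂, hK₂, hdense₂⟩ := h2
  set H : Subgroup G := H₁ ⊓ H₂ with hH
  have hHcoe : (↑H : Set G) = (↑H₁ : Set G) ∩ ↑H₂ := rfl
  set F₃ : Set G := F * (F * F) with hF₃
  have hF₃fin : F₃.Finite := hFfin.mul (hFfin.mul hFfin)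
  have hΛ2inv : (Λ * Λ)⁻¹ = Λ * Λ := by rw [mul_inv_rev, hsym]
  set Λ4 : Set G := (Λ * Λ) * (Λ * Λ) with hΛ4
  have hΛ4inv : Λ4⁻¹ = Λ4 := by rw [hΛ4, mul_inv_rev, hΛ2inv]
  have hΛ4F : Λ4 ⊆ F₃ * Λ := by
    calc Λ4 = (Λ * Λ) * (Λ * Λ) := rfl
    _ ⊆ (F * Λ) * (Λ * Λ) := Set.mul_subset_mul_right hFΛ
    _ = F * ((Λ * Λ) * Λ) := by rw [mul_assoc, mul_assoc]
    _ ⊆ F * ((F * Λ) * Λ) :=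
        Set.mul_subset_mul_left (Set.mul_subset_mul_right hFΛ)
    _ = F * (F * (Λ * Λ)) := by rw [mul_assoc]
    _ ⊆ F * (F * (F * Λ)) :=
        Set.mul_subset_mul_left (Set.mul_subset_mul_left hFΛ)
    _ = F₃ * Λ := by rw [hF₃, mul_assoc, mul_assoc]
  have hΛ4Fr : Λ4 ⊆ Λ * F₃⁻¹ := by
    have h := Set.inv_subset_inv.2 hΛ4F
    rwa [hΛ4inv, mul_inv_rev, hsym] at h
  have hH1inv : ((↑H₁ : Set G))⁻¹ = ↑H₁ := by
    ext x; simp [Set.mem_inv]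
  have hH2inv : ((↑H₂ : Set G))⁻¹ = ↑H₂ := by
    ext x; simp [Set.mem_inv]
  have h1S : (1 : G) ∈ Λ * Λ ∩ ((↑H₁ : Set G) ∩ ↑H₂) :=
    ⟨by simpa using Set.mul_mem_mul h1Λ h1Λ, H₁.one_mem, H₂.one_mem⟩
  -- the product set lands in Λ4 ∩ H
  have hprod : (Λ * Λ ∩ ((↑H₁ : Set G) ∩ ↑H₂)) * (Λ * Λ ∩ ((↑H₁ : Set G) ∩ ↑H₂))
      ⊆ Λ4 ∩ (↑H : Set G) := by
    rintro x ⟨a, ⟨haΛ, haH⟩, b, ⟨hbΛ, hbH⟩, rfl⟩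
    exact ⟨Set.mul_mem_mul haΛ hbΛ,
      ⟨H₁.mul_mem haH.1 hbH.1, H₂.mul_mem haH.2 hbH.2⟩⟩
  obtain ⟨F₀, hF₀fin, hcovL⟩ := cover_left Λ4 Λ H F₃ hF₃fin hΛ4F
  rw [hsym] at hcovL
  obtain ⟨F₀', hF₀'fin, hcovR⟩ := cover_right Λ4 Λ H F₃⁻¹ hF₃fin.inv hΛ4Fr
  rw [hsym] at hcovR
  refine ⟨Set.inter_subset_right, ⟨h1S, ?_, F₀, hF₀fin, ?_⟩, ⟨U₁, hU₁, ?_⟩, ?_⟩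
  · -- symmetric
    rw [Set.inter_inv, Set.inter_inv, hΛ2inv, hH1inv, hH2inv]
  · -- approximate multiplication
    exact hprod.trans hcovL
  · -- uniform discreteness
    apply Set.Subset.antisymm
    · intro x ⟨hx, hxU⟩
      have hmono : (Λ * Λ ∩ ((↑H₁:Set G) ∩ ↑H₂))⁻¹ * (Λ * Λ ∩ ((↑H₁:Set G) ∩ ↑H₂))
          ⊆ (Λ * Λ ∩ (↑H₁:Set G))⁻¹ * (Λ * Λ ∩ (↑H₁:Set G)) := by
        have hs : Λ * Λ ∩ ((↑H₁:Set G) ∩ ↑H₂) ⊆ Λ * Λ ∩ (↑H₁:Set G) :=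
          fun y hy => ⟨hy.1, hy.2.1⟩
        exact Set.mul_subset_mul (Set.inv_subset_inv.2 hs) hs
      rw [← hdisc₁]
      exact ⟨hmono hx, hxU⟩
    · rw [Set.singleton_subset_iff]
      refine ⟨?_, mem_of_mem_nhds hU₁⟩
      have h1inv : (1:G) ∈ (Λ * Λ ∩ ((↑H₁:Set G) ∩ ↑H₂))⁻¹ := by
        rw [Set.mem_inv, inv_one]; exact h1S
      simpa using Set.mul_mem_mul h1inv h1S
  -- relative density
  · set C : Set G := K₂ * K₁⁻¹ with hC
    have hCcomp : IsCompact C := hK₂.mul hK₁.inv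
    set T : Set G := Λ4 ∩ C with hT
    have hTfin : T.Finite := by
      have hsub : T ⊆ ⋃ f ∈ F₃, (({f} * Λ) ∩ C) := by
        rintro t ⟨htΛ, htC⟩
        obtain ⟨f, hf, a, ha, hfa⟩ := hΛ4F htΛ
        exact Set.mem_iUnion₂.2 ⟨f, hf, ⟨f, rfl, a, ha, hfa⟩, htC⟩
      refine Set.Finite.subset (Set.Finite.biUnion hF₃fin fun f _ => ?_) hsub
      refine sep_inter_compact_finite hU₀ ?_ hCcomp
      rintro a ⟨fa, hfa, a₁, ha₁, rfl⟩ b ⟨fb, hfb, b₁, hb₁, rfl⟩ hab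
      rw [Set.mem_singleton_iff] at hfa hfb
      have hff : fa = fb := hfa.trans hfb.symm
      subst hff
      have h1' : a₁⁻¹ * b₁ ∈ Λ⁻¹ * Λ ∩ U₀ := by
        constructor
        · exact Set.mul_mem_mul (Set.inv_mem_inv.2 ha₁) hb₁
        · have heq : (fa * a₁)⁻¹ * (fa * b₁) = a₁⁻¹ * b₁ := by group
          rwa [heq] at hab
      rw [hdisc₀, Set.mem_singleton_iff] at h1'
      have : a₁ = b₁ := by
        have := congrArg (fun g => a₁ * g) h1'
        simpa [mul_assoc] using this.symm
      rw [this]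
    -- choice of witnesses
    have pick : ∀ t : G, ∃ p : G × G,
        (∃ q : G × G, q.1 ∈ Λ * Λ ∩ (↑H₁:Set G) ∧ q.2 ∈ Λ * Λ ∩ (↑H₂:Set G) ∧
          q.2⁻¹ * q.1 = t) →
        p.1 ∈ Λ * Λ ∩ (↑H₁:Set G) ∧ p.2 ∈ Λ * Λ ∩ (↑H₂:Set G) ∧ p.2⁻¹ * p.1 = t := by
      intro t
      by_cases h : ∃ q : G × G, q.1 ∈ Λ * Λ ∩ (↑H₁:Set G) ∧
          q.2 ∈ Λ * Λ ∩ (↑H₂:Set G) ∧ q.2⁻¹ * q.1 = t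
      · exact ⟨h.choose, fun _ => h.choose_spec⟩
      · exact ⟨(1, 1), fun hc => absurd hc h⟩
    choose w hw using pick
    set M : Set G := (fun t => (w t).1) '' T with hM
    have hMfin : M.Finite := hTfin.image _
    -- main density claim
    have hmain : (↑H₁ : Set G) ∩ ↑H₂ ⊆ (Λ4 ∩ (↑H : Set G)) * (M * K₁) := by
      rintro x ⟨hx1, hx2⟩
      obtain ⟨l₁, hl₁, c₁, hc₁, hxc₁⟩ := hdense₁ hx1
      obtain ⟨l₂, hl₂, c₂, hc₂, hxc₂⟩ := hdense₂ hx2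
      set t : G := l₂⁻¹ * l₁ with htdef
      have htT : t ∈ T := by
        constructor
        · exact Set.mul_mem_mul (hΛ2inv ▸ Set.inv_mem_inv.2 hl₂.1 : l₂⁻¹ ∈ Λ * Λ) hl₁.1
        · have hcc : t = c₂ * c₁⁻¹ := by
            have e1 : c₁ = l₁⁻¹ * x := by rw [← hxc₁]; group
            have e2 : c₂ = l₂⁻¹ * x := by rw [← hxc₂]; group
            rw [htdef, e1, e2]; group
          rw [hcc]
          exact Set.mul_mem_mul hc₂ (Set.inv_mem_inv.2 hc₁)
      obtain ⟨ha₀, hb₀, hab⟩ := hw t ⟨(l₁, l₂), hl₁, hl₂, rfl⟩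
      set a₀ : G := (w t).1 with ha₀def
      set b₀ : G := (w t).2 with hb₀def
      have key : l₁ * a₀⁻¹ = l₂ * b₀⁻¹ := by
        have h := congrArg (fun g => l₂ * g * a₀⁻¹) hab
        simp only [htdef] at h
        have h' : l₂ * (b₀⁻¹ * a₀) * a₀⁻¹ = l₂ * (l₂⁻¹ * l₁) * a₀⁻¹ := h
        calc l₁ * a₀⁻¹ = l₂ * (l₂⁻¹ * l₁) * a₀⁻¹ := by group
        _ = l₂ * (b₀⁻¹ * a₀) * a₀⁻¹ := h'.symm
        _ = l₂ * b₀⁻¹ := by group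
      refine ⟨l₁ * a₀⁻¹, ⟨?_, ?_, ?_⟩, a₀ * c₁, Set.mul_mem_mul ?_ hc₁, ?_⟩
      · exact Set.mul_mem_mul hl₁.1 (hΛ2inv ▸ Set.inv_mem_inv.2 ha₀.1)
      · exact H₁.mul_mem hl₁.2 (H₁.inv_mem ha₀.2)
      · rw [key]; exact H₂.mul_mem hl₂.2 (H₂.inv_mem hb₀.2)
      · exact ⟨t, htT, rfl⟩
      · rw [← hxc₁]; group
    refine ⟨F₀' * (M * K₁), (hF₀'fin.isCompact).mul ((hMfin.isCompact).mul hK₁), ?_⟩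
    calc (↑H₁ : Set G) ∩ ↑H₂ ⊆ (Λ4 ∩ (↑H : Set G)) * (M * K₁) := hmain
    _ ⊆ ((Λ * Λ ∩ (↑H : Set G)) * F₀') * (M * K₁) := Set.mul_subset_mul_right hcovR
    _ = (Λ * Λ ∩ ((↑H₁ : Set G) ∩ ↑H₂)) * (F₀' * (M * K₁)) := by
        rw [hHcoe, mul_assoc]
end

section
/- If Λ₁ ⊆ Λ₂ are two approximate lattices in a locally compact second countable group G, then Λ₁ and Λ₂ are commensurable. -/
open Pointwise MeasureTheory
open scoped ENNReal

def SetCommensurable {G : Type*} [Group G] (X Y : Set G) : Prop :=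
  ∃ F : Set G, F.Finite ∧ X ⊆ F * Y ∩ Y * F ∧ Y ⊆ F * X ∩ X * F

def IsApproxLattice {G : Type*} [Group G] [TopologicalSpace G] [MeasurableSpace G]
    (μ : Measure G) (Λ : Set G) : Prop :=
  IsApproxSubgroup Λ ∧ UniformlyDiscrete Λ ∧
    ∃ F : Set G, MeasurableSet F ∧ μ F < ⊤ ∧ Λ * F = Set.univ

open scoped Classical in
lemma sum_meas_le_card_mul {α : Type*} [MeasurableSpace α] (μ : Measure α) {ι : Type*}
    (P : Finset ι) (s : ι → Set α) (F : Set α) (hFm : MeasurableSet F)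
    (hm : ∀ i ∈ P, MeasurableSet (s i)) (hsub : ∀ i ∈ P, s i ⊆ F) (N : ℕ)
    (hN : ∀ x ∈ F, ∑ i ∈ P, (s i).indicator (1 : α → ℝ≥0∞) x ≤ N) :
    ∑ i ∈ P, μ (s i) ≤ N * μ F := by
  calc ∑ i ∈ P, μ (s i) = ∑ i ∈ P, ∫⁻ x, (s i).indicator 1 x ∂μ := by
        refine Finset.sum_congr rfl fun i hi => ?_
        rw [lintegral_indicator_one (hm i hi)]
    _ = ∫⁻ x, ∑ i ∈ P, (s i).indicator 1 x ∂μ :=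
        (lintegral_finset_sum P (fun i hi => measurable_one.indicator (hm i hi))).symm
    _ ≤ ∫⁻ x, F.indicator (fun _ => (N : ℝ≥0∞)) x ∂μ := by
        refine lintegral_mono fun x => ?_
        by_cases hx : x ∈ F
        · rw [Set.indicator_of_mem hx]
          exact hN x hx
        · have : ∀ i ∈ P, (s i).indicator (1 : α → ℝ≥0∞) x = 0 := by
            intro i hi
            exact Set.indicator_of_notMem (fun hxi => hx (hsub i hi hxi)) _
          rw [Finset.sum_congr rfl this, Set.indicator_of_notMem hx]
          simp
    _ = N * μ F := by rw [lintegral_indicator_const hFm]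

theorem stmt9 {G : Type*} [Group G] [TopologicalSpace G] [IsTopologicalGroup G]
    [LocallyCompactSpace G] [SecondCountableTopology G]
    [MeasurableSpace G] [BorelSpace G] (μ : Measure G) [μ.IsHaarMeasure]
    (Λ₁ Λ₂ : Set G) (hsub : Λ₁ ⊆ Λ₂)
    (h1 : IsApproxLattice μ Λ₁) (h2 : IsApproxLattice μ Λ₂) :
    SetCommensurable Λ₁ Λ₂ := by
  classical
  obtain ⟨⟨h1one, h1inv, T₁, hT₁fin, hT₁⟩, -, F, hFmeas, hFfin, hFcov⟩ := h1
  obtain ⟨⟨h2one, h2inv, T₂, hT₂fin, hT₂⟩, ⟨U, hU, hUsep⟩, -⟩ := h2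
  have h2mem_inv : ∀ x ∈ Λ₂, x⁻¹ ∈ Λ₂ := fun x hx => h2inv ▸ Set.inv_mem_inv.mpr hx
  have h1mem_inv : ∀ x ∈ Λ₁, x⁻¹ ∈ Λ₁ := fun x hx => h1inv ▸ Set.inv_mem_inv.mpr hx
  -- neighbourhoods
  obtain ⟨U', hU'sub, hU'open, hU'1⟩ := mem_nhds_iff.mp hU
  obtain ⟨W, hWopen, hW1, hWW⟩ := exists_open_nhds_one_mul_subset (hU'open.mem_nhds hU'1)
  set W₀ : Set G := W ∩ W⁻¹ with hW₀def
  have hW₀open : IsOpen W₀ := hWopen.inter hWopen.inv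
  have hW₀1 : (1:G) ∈ W₀ := ⟨hW1, by simpa using hW1⟩
  have hW₀symm : ∀ x ∈ W₀, x⁻¹ ∈ W₀ := by
    intro x hx
    exact ⟨Set.mem_inv.mp hx.2, by simpa using hx.1⟩
  have hW₀U' : ∀ x ∈ W₀, ∀ y ∈ W₀, x⁻¹ * y ∈ U' :=
    fun x hx y hy => hWW (Set.mul_mem_mul (Set.mem_inv.mp hx.2) hy.1)
  have hW₀subU' : W₀ ⊆ U' := fun z hz => by
    have := hWW (Set.mul_mem_mul hz.1 hW1)
    simpa using this
  -- separation within Λ₂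
  have hsep : ∀ x ∈ Λ₂, ∀ y ∈ Λ₂, x⁻¹ * y ∈ U' → x = y := by
    intro x hx y hy hxy
    have hmem : x⁻¹ * y ∈ Λ₂⁻¹ * Λ₂ ∩ U :=
      ⟨Set.mul_mem_mul (Set.inv_mem_inv.mpr hx) hy, hU'sub hxy⟩
    rw [hUsep] at hmem
    have h1 : x⁻¹ * y = 1 := hmem
    exact inv_mul_eq_one.mp h1
  -- small open set V
  obtain ⟨V', hV'open, hV'1, hV'V'⟩ := exists_open_nhds_one_mul_subset (hW₀open.mem_nhds hW₀1)
  obtain ⟨K, hKcomp, hKnhds⟩ := exists_compact_mem_nhds (1 : G)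
  set V : Set G := V' ∩ V'⁻¹ ∩ interior K with hVdef
  have hVopen : IsOpen V := (hV'open.inter hV'open.inv).inter isOpen_interior
  have hV1 : (1:G) ∈ V :=
    ⟨⟨hV'1, by simpa using hV'1⟩, mem_interior_iff_mem_nhds.mpr hKnhds⟩
  have hVW₀ : ∀ v ∈ V, ∀ w ∈ V, v * w⁻¹ ∈ W₀ :=
    fun v hv w hw => hV'V' (Set.mul_mem_mul hv.1.1 (Set.mem_inv.mp hw.1.2))
  have hμV0 : μ V ≠ 0 := (hVopen.measure_pos μ ⟨1, hV1⟩).ne'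
  have hμVtop : μ V ≠ ⊤ :=
    (lt_of_le_of_lt (measure_mono (fun x hx => interior_subset hx.2)) hKcomp.measure_lt_top).ne
  -- translation invariance helper
  have hmeasmul : ∀ (g : G) (X : Set G), μ (g • X) = μ X := by
    intro g X
    have h : g • X = (fun h => g⁻¹ * h) ⁻¹' X := by
      ext x
      simp [Set.mem_smul_set_iff_inv_smul_mem, smul_eq_mul]
    rw [h, measure_preimage_mul]
  -- countability
  have hΛ₂count : Λ₂.Countable := by
    obtain ⟨D₀, hD₀count, hD₀dense⟩ := TopologicalSpace.exists_countable_dense G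
    have hpick : ∀ x : G, ∃ d, x ∈ Λ₂ → (d ∈ D₀ ∧ d ∈ x • V) := by
      intro x
      by_cases hx : x ∈ Λ₂
      · obtain ⟨d, hd, hdv⟩ := hD₀dense.exists_mem_open (hVopen.smul x)
          ⟨x • 1, Set.smul_mem_smul_set hV1⟩
        exact ⟨d, fun _ => ⟨hd, hdv⟩⟩
      · exact ⟨1, fun h => absurd h hx⟩
    choose f hf using hpick
    refine Set.MapsTo.countable_of_injOn (f := f) (fun x hx => (hf x hx).1) ?_ hD₀count
    intro x hx y hy hxy
    obtain ⟨v, hv, hxv⟩ := Set.mem_smul_set.mp (hf x hx).2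
    obtain ⟨w, hw, hyw⟩ := Set.mem_smul_set.mp (hf y hy).2
    have heq : x * v = y * w := by
      have : f x = f y := hxy
      rw [← this] at hyw
      have h1 : x * v = f x := by simpa [smul_eq_mul] using hxv
      have h2 : y * w = f x := by simpa [smul_eq_mul] using hyw
      rw [h1, h2]
    have hx' : x = y * w * v⁻¹ := by rw [← heq]; group
    have h1 : y⁻¹ * x = w * v⁻¹ := by rw [hx']; group
    exact (hsep y hy x hx (hW₀subU' (by rw [h1]; exact hVW₀ w hw v hv))).symm
  have hΛ₁count : Λ₁.Countable := hΛ₂count.mono hsub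
  -- the finite set Q
  set P4 : Set G := Λ₂ * Λ₂ * Λ₂ * Λ₂ with hP4def
  have s1 : Λ₂ * Λ₂ * Λ₂ ⊆ T₂ * T₂ * Λ₂ := by
    calc Λ₂ * Λ₂ * Λ₂ ⊆ (T₂ * Λ₂) * Λ₂ := Set.mul_subset_mul_right hT₂
      _ = T₂ * (Λ₂ * Λ₂) := mul_assoc _ _ _
      _ ⊆ T₂ * (T₂ * Λ₂) := Set.mul_subset_mul_left hT₂
      _ = T₂ * T₂ * Λ₂ := (mul_assoc _ _ _).symm
  have hP4sub : P4 ⊆ T₂ * T₂ * T₂ * Λ₂ := by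
    calc Λ₂ * Λ₂ * Λ₂ * Λ₂ ⊆ (T₂ * T₂ * Λ₂) * Λ₂ := Set.mul_subset_mul_right s1
      _ = T₂ * T₂ * (Λ₂ * Λ₂) := mul_assoc _ _ _
      _ ⊆ T₂ * T₂ * (T₂ * Λ₂) := Set.mul_subset_mul_left hT₂
      _ = T₂ * T₂ * T₂ * Λ₂ := (mul_assoc _ _ _).symm
  set Q : Set G := P4 ∩ W₀ with hQdef
  have hQfin : Q.Finite := by
    have hsubQ : Q ⊆ ⋃ t ∈ T₂ * T₂ * T₂, (t • Λ₂ ∩ W₀) := by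
      intro q hq
      obtain ⟨t, ht, l, hl, hteq⟩ := Set.mem_mul.mp (hP4sub hq.1)
      refine Set.mem_biUnion ht ⟨?_, hq.2⟩
      rw [← hteq]
      exact Set.smul_mem_smul_set hl
    refine Set.Finite.subset (Set.Finite.biUnion ((hT₂fin.mul hT₂fin).mul hT₂fin)
      (fun t _ => ?_)) hsubQ
    refine Set.Subsingleton.finite ?_
    rintro x ⟨hx1, hx2⟩ y ⟨hy1, hy2⟩
    obtain ⟨l, hl, rfl⟩ := Set.mem_smul_set.mp hx1
    obtain ⟨l', hl', rfl⟩ := Set.mem_smul_set.mp hy1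
    have hll : l = l' := by
      apply hsep l hl l' hl'
      have h1 : l⁻¹ * l' = (t • l)⁻¹ * (t • l') := by
        rw [smul_eq_mul, smul_eq_mul]; group
      rw [h1]
      exact hW₀U' _ hx2 _ hy2
    rw [hll]
  have hQ1 : (1:G) ∈ Q := by
    constructor
    · have : (1:G) * 1 * 1 * 1 ∈ P4 :=
        Set.mul_mem_mul (Set.mul_mem_mul (Set.mul_mem_mul h2one h2one) h2one) h2one
      simpa using this
    · exact hW₀1
  have hQsym : ∀ q ∈ Q, q⁻¹ ∈ Q := by
    rintro q ⟨hq1, hq2⟩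
    obtain ⟨abc, habc, d, hd, rfl⟩ := Set.mem_mul.mp hq1
    obtain ⟨ab, hab, c, hc, rfl⟩ := Set.mem_mul.mp habc
    obtain ⟨a, ha, b, hb, rfl⟩ := Set.mem_mul.mp hab
    refine ⟨?_, hW₀symm _ hq2⟩
    have hmem : d⁻¹ * c⁻¹ * b⁻¹ * a⁻¹ ∈ P4 :=
      Set.mul_mem_mul (Set.mul_mem_mul (Set.mul_mem_mul (h2mem_inv d hd) (h2mem_inv c hc))
        (h2mem_inv b hb)) (h2mem_inv a ha)
    have heq : (a * b * c * d)⁻¹ = d⁻¹ * c⁻¹ * b⁻¹ * a⁻¹ := by group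
    rw [heq]
    exact hmem
  -- the relation
  set rel : G → G → Prop := fun x y => ∃ a ∈ Λ₁, ∃ b ∈ Λ₁, ∃ q ∈ Q, y = a * b * x * q
    with hreldef
  have hrel_refl : ∀ x, rel x x := fun x => ⟨1, h1one, 1, h1one, 1, hQ1, by group⟩
  have hrel_symm : ∀ x y, rel x y → rel y x := by
    rintro x y ⟨a, ha, b, hb, q, hq, rfl⟩
    exact ⟨b⁻¹, h1mem_inv b hb, a⁻¹, h1mem_inv a ha, q⁻¹, hQsym q hq, by group⟩
  -- Zorn's lemma: maximal pairwise unrelated subset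
  obtain ⟨M, hMmax⟩ := zorn_subset
    {M : Set G | M ⊆ Λ₂ ∧ ∀ x ∈ M, ∀ y ∈ M, x ≠ y → ¬ rel x y} (by
      intro c hcS hchain
      refine ⟨⋃₀ c, ⟨Set.sUnion_subset fun s hs => (hcS hs).1, ?_⟩,
        fun s hs => Set.subset_sUnion_of_mem hs⟩
      intro x hx y hy hne
      obtain ⟨s, hs, hxs⟩ := hx
      obtain ⟨t, ht, hyt⟩ := hy
      rcases eq_or_ne s t with rfl | hst
      · exact (hcS hs).2 x hxs y hyt hne
      · rcases hchain hs ht hst with h | h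
        · exact (hcS ht).2 x (h hxs) y hyt hne
        · exact (hcS hs).2 x hxs y (h hyt) hne)
  have hMS := hMmax.prop
  have hMsub : M ⊆ Λ₂ := hMS.1
  have hMpair : ∀ x ∈ M, ∀ y ∈ M, x ≠ y → ¬ rel x y := hMS.2
  have hMcov : ∀ y ∈ Λ₂, ∃ m ∈ M, rel m y := by
    intro y hy
    by_contra h
    push_neg at h
    have hyM : y ∉ M := fun hyM => (h y hyM) (hrel_refl y)
    have hins : insert y M ∈ {M : Set G | M ⊆ Λ₂ ∧ ∀ x ∈ M, ∀ y ∈ M, x ≠ y → ¬ rel x y} := by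
      refine ⟨Set.insert_subset hy hMsub, ?_⟩
      intro x hx z hz hne
      rcases hx with rfl | hx
      · rcases hz with rfl | hz
        · exact absurd rfl hne
        · exact fun hr => (h z hz) (hrel_symm _ _ hr)
      · rcases hz with rfl | hz
        · exact h x hx
        · exact hMpair x hx z hz hne
    have := hMmax.2 hins (Set.subset_insert y M)
    exact hyM (this (Set.mem_insert y M))
  -- per-point finsets
  have hAex : ∀ m : G, ∃ A : Finset G, (↑A : Set G) ⊆ Λ₁ ∧
      μ V / 2 < ∑ a ∈ A, μ ((a⁻¹ * m) • V ∩ F) := by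
    intro m
    have hcovm : m • V ⊆ ⋃ a ∈ Λ₁, (m • V ∩ a • F) := by
      intro x hx
      have hxu : x ∈ Λ₁ * F := by rw [hFcov]; trivial
      obtain ⟨a, ha, f, hf, rfl⟩ := Set.mem_mul.mp hxu
      exact Set.mem_biUnion ha ⟨hx, Set.smul_mem_smul_set hf⟩
    have hle : μ V ≤ ∑' (a : ↑Λ₁), μ (m • V ∩ ((a : G)) • F) := by
      calc μ V = μ (m • V) := (hmeasmul m V).symm
        _ ≤ μ (⋃ a ∈ Λ₁, (m • V ∩ a • F)) := measure_mono hcovm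
        _ ≤ ∑' (a : ↑Λ₁), μ (m • V ∩ ((a : G)) • F) :=
            measure_biUnion_le μ hΛ₁count _
    have hhalf : μ V / 2 < ∑' (a : ↑Λ₁), μ (m • V ∩ ((a : G)) • F) :=
      lt_of_lt_of_le (ENNReal.half_lt_self hμV0 hμVtop) hle
    rw [ENNReal.tsum_eq_iSup_sum] at hhalf
    obtain ⟨t, ht⟩ := lt_iSup_iff.mp hhalf
    refine ⟨t.image Subtype.val, ?_, ?_⟩
    · intro a ha
      rw [Finset.coe_image] at ha
      obtain ⟨b, -, rfl⟩ := ha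
      exact b.2
    · have hsum : ∑ a ∈ t.image Subtype.val, μ ((a⁻¹ * m) • V ∩ F)
          = ∑ a ∈ t, μ (m • V ∩ ((a : G)) • F) := by
        rw [Finset.sum_image (fun x _ y _ hxy => Subtype.ext hxy)]
        refine Finset.sum_congr rfl fun a _ => ?_
        have h : (a : G)⁻¹ • (m • V ∩ (a : G) • F) = ((a : G)⁻¹ * m) • V ∩ F := by
          rw [Set.smul_set_inter, smul_smul, inv_smul_smul]
        rw [← h, hmeasmul]
      rw [hsum]
      exact ht
  choose A hA₁ hA₂ using hAex
  -- M is finite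
  have hMfin : M.Finite := by
    by_contra hinf
    have hM_inf : M.Infinite := hinf
    set c : ℝ≥0∞ := μ V / 2 with hcdef
    have hc0 : c ≠ 0 := by
      intro h
      rcases ENNReal.div_eq_zero_iff.mp h with h' | h'
      · exact hμV0 h'
      · simp at h'
    set B : ℝ≥0∞ := (hQfin.toFinset.card : ℝ≥0∞) * μ F with hBdef
    have hBtop : B ≠ ⊤ := ENNReal.mul_ne_top (by simp) hFfin.ne
    obtain ⟨n, hn⟩ := ENNReal.exists_nat_gt (ENNReal.div_lt_top hBtop hc0).ne
    obtain ⟨M₀, hM₀sub, hM₀card⟩ := hM_inf.exists_subset_card_eq n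
    -- the sigma finset of pairs
    set P : Finset ((_ : G) × G) := M₀.sigma (fun m => A m) with hPdef
    set sset : ((_ : G) × G) → Set G := fun σ => ((σ.2)⁻¹ * σ.1) • V ∩ F with hssetdef
    have hmult : ∀ x, (P.filter fun σ => x ∈ sset σ).card ≤ hQfin.toFinset.card := by
      intro x
      set Pf := P.filter fun σ => x ∈ sset σ with hPfdef
      rcases Pf.eq_empty_or_nonempty with he | ⟨σ₀, hσ₀⟩
      · simp [he]
      · have hprop : ∀ σ ∈ Pf, σ.1 ∈ M₀ ∧ σ.2 ∈ A σ.1 ∧ x ∈ ((σ.2)⁻¹ * σ.1) • V := by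
          intro σ hσ
          have h := Finset.mem_filter.mp hσ
          have hP := Finset.mem_sigma.mp h.1
          exact ⟨hP.1, hP.2, h.2.1⟩
        obtain ⟨hm₀M, ha₀A, hx₀⟩ := hprop σ₀ hσ₀
        have ha₀Λ : σ₀.2 ∈ Λ₁ := hA₁ σ₀.1 ha₀A
        obtain ⟨v₀, hv₀, hxv₀⟩ := Set.mem_smul_set.mp hx₀
        have hkey2 : ∀ σ ∈ Pf, σ.1 = σ₀.1 ∧ (σ₀.1)⁻¹ * σ₀.2 * (σ.2)⁻¹ * σ.1 ∈ Q := by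
          intro σ hσ
          obtain ⟨hmM, haA, hx'⟩ := hprop σ hσ
          have haΛ : σ.2 ∈ Λ₁ := hA₁ σ.1 haA
          obtain ⟨v, hv, hxv⟩ := Set.mem_smul_set.mp hx'
          have heq : (σ.2)⁻¹ * σ.1 * v = (σ₀.2)⁻¹ * σ₀.1 * v₀ := by
            have h1 : ((σ.2)⁻¹ * σ.1) * v = x := by simpa [smul_eq_mul] using hxv
            have h2 : ((σ₀.2)⁻¹ * σ₀.1) * v₀ = x := by simpa [smul_eq_mul] using hxv₀
            rw [h1, h2]
          have hq' : (σ₀.1)⁻¹ * σ₀.2 * (σ.2)⁻¹ * σ.1 = v₀ * v⁻¹ := by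
            have hm : σ.1 = σ.2 * ((σ₀.2)⁻¹ * σ₀.1 * v₀) * v⁻¹ := by
              rw [← heq]; group
            rw [hm]; group
          have hqQ : (σ₀.1)⁻¹ * σ₀.2 * (σ.2)⁻¹ * σ.1 ∈ Q := by
            constructor
            · exact Set.mul_mem_mul (Set.mul_mem_mul
                (Set.mul_mem_mul (h2mem_inv _ (hMsub (hM₀sub hm₀M))) (hsub ha₀Λ))
                (hsub (h1mem_inv _ haΛ))) (hMsub (hM₀sub hmM))
            · rw [hq']
              exact hVW₀ v₀ hv₀ v hv
          refine ⟨?_, hqQ⟩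
          by_contra hne
          have hrelm : rel σ.1 σ₀.1 :=
            ⟨σ₀.2, ha₀Λ, (σ.2)⁻¹, h1mem_inv _ haΛ,
              ((σ₀.1)⁻¹ * σ₀.2 * (σ.2)⁻¹ * σ.1)⁻¹, hQsym _ hqQ, by group⟩
          exact hMpair σ.1 (hM₀sub hmM) σ₀.1 (hM₀sub hm₀M) hne hrelm
        refine Finset.card_le_card_of_injOn
          (fun σ => (σ₀.1)⁻¹ * σ₀.2 * (σ.2)⁻¹ * σ₀.1)
          (fun σ hσ => hQfin.mem_toFinset.mpr (by
            have h := hkey2 σ hσ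
            have h2 := h.2
            rw [h.1] at h2
            exact h2)) ?_
        intro σ hσ σ' hσ' heq2
        have h1 := (hkey2 σ hσ).1
        have h2 := (hkey2 σ' hσ').1
        have hinv2 : (σ.2)⁻¹ = (σ'.2)⁻¹ := by
          have := heq2
          have h3 : (σ₀.1)⁻¹ * σ₀.2 * (σ.2)⁻¹ = (σ₀.1)⁻¹ * σ₀.2 * (σ'.2)⁻¹ :=
            mul_right_cancel this
          exact mul_left_cancel h3
        exact Sigma.ext (h1.trans h2.symm) (heq_of_eq (inv_injective hinv2))
    have hmult' : ∀ x ∈ F, ∑ σ ∈ P, (sset σ).indicator (1 : G → ℝ≥0∞) x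
        ≤ (hQfin.toFinset.card : ℕ) := by
      intro x _
      have heq : ∑ σ ∈ P, (sset σ).indicator (1 : G → ℝ≥0∞) x
          = ((P.filter fun σ => x ∈ sset σ).card : ℝ≥0∞) := by
        rw [← Finset.sum_boole]
        refine Finset.sum_congr rfl fun σ _ => by simp [Set.indicator_apply]
      rw [heq]
      exact_mod_cast hmult x
    have hupper : ∑ σ ∈ P, μ (sset σ) ≤ (hQfin.toFinset.card : ℝ≥0∞) * μ F :=
      sum_meas_le_card_mul μ P sset F hFmeas
        (fun σ _ => ((hVopen.smul _).measurableSet).inter hFmeas)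
        (fun σ _ => Set.inter_subset_right) _ hmult'
    have hlower : (M₀.card : ℝ≥0∞) * c ≤ ∑ σ ∈ P, μ (sset σ) := by
      rw [hPdef, Finset.sum_sigma]
      show (M₀.card : ℝ≥0∞) * c ≤ ∑ m ∈ M₀, ∑ a ∈ A m, μ ((a⁻¹ * m) • V ∩ F)
      calc (M₀.card : ℝ≥0∞) * c = M₀.card • c := by rw [nsmul_eq_mul]
        _ ≤ ∑ m ∈ M₀, ∑ a ∈ A m, μ ((a⁻¹ * m) • V ∩ F) :=
            Finset.card_nsmul_le_sum M₀ _ c (fun m _ => le_of_lt (hA₂ m))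
    have hkey : (M₀.card : ℝ≥0∞) * c ≤ B := hlower.trans hupper
    have hle2 : (n : ℝ≥0∞) ≤ B / c :=
      (ENNReal.le_div_iff_mul_le (b := c) (c := B) (Or.inl hc0) (Or.inr hBtop)).mpr
        (by rw [← hM₀card]; exact hkey)
    exact absurd hle2 (not_le.mpr hn)
  -- final assembly
  have hT₁r : ∀ x ∈ Λ₁, ∀ y ∈ Λ₁, x * y ∈ Λ₁ * T₁⁻¹ := by
    intro x hx y hy
    have h : y⁻¹ * x⁻¹ ∈ T₁ * Λ₁ :=
      hT₁ (Set.mul_mem_mul (h1mem_inv y hy) (h1mem_inv x hx))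
    obtain ⟨t, ht, cc, hcc, hteq⟩ := Set.mem_mul.mp h
    have h3 : x * y = cc⁻¹ * t⁻¹ := by
      have h4 : x * y = (t * cc)⁻¹ := by rw [hteq]; group
      rw [h4]; group
    rw [h3]
    exact Set.mul_mem_mul (h1mem_inv cc hcc) (Set.inv_mem_inv.mpr ht)
  set S₀ : Set G := T₁⁻¹ * M * Q with hS₀def
  have hS₀fin : S₀.Finite := (hT₁fin.inv.mul hMfin).mul hQfin
  have hΛ₂S : Λ₂ ⊆ Λ₁ * S₀ := by
    intro y hy
    obtain ⟨m, hm, a, ha, b, hb, q, hq, hye⟩ := hMcov y hy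
    obtain ⟨cc, hcc, s, hs, hcs⟩ := Set.mem_mul.mp (hT₁r a ha b hb)
    refine Set.mem_mul.mpr ⟨cc, hcc, s * m * q,
      Set.mul_mem_mul (Set.mul_mem_mul hs hm) hq, ?_⟩
    rw [hye, ← hcs]
    group
  have hΛ₂S' : Λ₂ ⊆ S₀⁻¹ * Λ₁ := by
    intro y hy
    obtain ⟨cc, hcc, z, hz, hze⟩ := Set.mem_mul.mp (hΛ₂S (h2mem_inv y hy))
    refine Set.mem_mul.mpr ⟨z⁻¹, Set.inv_mem_inv.mpr hz, cc⁻¹, h1mem_inv cc hcc, ?_⟩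
    have hy2 : y = (cc * z)⁻¹ := by rw [hze]; group
    rw [hy2]; group
  have h1F : (1:G) ∈ (S₀ ∪ S₀⁻¹) ∪ ({1} : Set G) := Set.mem_union_right _ rfl
  have hsub1 : S₀⁻¹ ⊆ (S₀ ∪ S₀⁻¹) ∪ ({1} : Set G) :=
    fun z hz => Set.mem_union_left _ (Set.mem_union_right _ hz)
  have hsub2 : S₀ ⊆ (S₀ ∪ S₀⁻¹) ∪ ({1} : Set G) :=
    fun z hz => Set.mem_union_left _ (Set.mem_union_left _ hz)
  refine ⟨(S₀ ∪ S₀⁻¹) ∪ {1},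
    (hS₀fin.union hS₀fin.inv).union (Set.finite_singleton 1), ?_, ?_⟩
  · intro x hx
    exact Set.mem_mul.mpr ⟨x, Set.mem_inter
      (Set.mem_mul.mpr ⟨1, h1F, x, hsub hx, one_mul x⟩) (hsub hx), 1, h1F, mul_one x⟩
  · intro y hy
    obtain ⟨cc, hcc, z, hz, hze⟩ := Set.mem_mul.mp (hΛ₂S hy)
    exact Set.mem_mul.mpr ⟨cc, Set.mem_inter
      (Set.mem_mul.mpr ⟨1, h1F, cc, hcc, one_mul cc⟩) hcc, z, hsub2 hz, hze⟩
end

section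
/- Let Γ be a group, Λ an approximate subgroup of Γ, and f : Γ → H a good model of (Λ, Γ) with H locally compact. Then the graph Γ_f = {(γ, f(γ)) : γ ∈ Γ}, viewed inside G × H when Γ is a uniformly discrete approximate subgroup of a locally compact group G containing Λ with Γ = ⟨Λ⟩, is a discrete subgroup of G × H. -/
open Pointwise

/-- `f` is a good model of the approximate subgroup `Λ` of `Γ`. -/
def IsGoodModel {Γ H : Type*} [Group Γ] [Group H] [TopologicalSpace H]
    (Λ : Set Γ) (f : Γ →* H) : Prop :=
  IsCompact (closure (f '' Λ)) ∧ ∃ U ∈ nhds (1 : H), f ⁻¹' U ⊆ Λ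

theorem stmt14 {G H : Type*} [Group G] [TopologicalSpace G] [IsTopologicalGroup G]
    [LocallyCompactSpace G] [Group H] [TopologicalSpace H] [IsTopologicalGroup H]
    [LocallyCompactSpace H]
    (Λ : Set G) (hΛ : IsApproxSubgroup Λ) (hud : UniformlyDiscrete Λ)
    (Γ : Subgroup G) (hΓ : Γ = Subgroup.closure Λ)
    (f : Γ →* H) (hf : IsGoodModel {x : Γ | (x : G) ∈ Λ} f) :
    DiscreteTopology ((Γ.subtype.prod f).range : Subgroup (G × H)) := by
  obtain ⟨U, hU, hUeq⟩ := hud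
  obtain ⟨-, V, hV, hVsub⟩ := hf
  obtain ⟨U', hU'sub, hU'open, hU'mem⟩ := mem_nhds_iff.mp hU
  obtain ⟨V', hV'sub, hV'open, hV'mem⟩ := mem_nhds_iff.mp hV
  rw [discreteTopology_iff_isOpen_singleton_one]
  rw [isOpen_induced_iff]
  refine ⟨U' ×ˢ V', hU'open.prod hV'open, ?_⟩
  ext ⟨p, hp⟩
  simp only [Set.mem_preimage, Set.mem_singleton_iff]
  obtain ⟨γ, rfl⟩ := hp
  constructor
  · rintro ⟨h1, h2⟩
    have hγΛ : (γ : G) ∈ Λ := hVsub (hV'sub h2)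
    have : (γ : G) ∈ Λ⁻¹ * Λ ∩ U := by
      refine ⟨?_, hU'sub h1⟩
      exact ⟨1, by simpa using hΛ.1, γ, hγΛ, by simp⟩
    rw [hUeq] at this
    have hγ1 : γ = 1 := Subtype.ext this
    subst hγ1
    ext
    · simp [this]
    · simp
  · intro h
    have : ((Γ.subtype.prod f) γ : G × H) = 1 := by
      rw [← Subtype.coe_inj] at h
      simpa using h
    have h1 : (γ : G) = 1 := congrArg Prod.fst this
    have hγ1 : γ = 1 := Subtype.ext h1
    subst hγ1
    constructor
    · simpa using hU'mem
    · simpa using hV'mem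
end

section
/- Let G be a group, Λ and Λ_N approximate subgroups of G such that every λ ∈ Λ satisfies: λΛ_Nλ⁻¹ is commensurable with Λ_N, and ⋃_{λ∈Λ} λΛ_Nλ⁻¹ is commensurable with Λ_N. Then for every k ≥ 1, ⋃_{λ∈Λ^k} λΛ_Nλ⁻¹ is commensurable with Λ_N. -/
open Pointwise

private lemma mem_mul_of_eq {G : Type*} [Group G] {s t : Set G} {a b c : G}
    (ha : a ∈ s) (hb : b ∈ t) (h : c = a * b) : c ∈ s * t := by
  rw [h]; exact Set.mul_mem_mul ha hb

theorem stmt17 {G : Type*} [Group G] (Λ ΛN : Set G)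
    (hΛ : IsApproxSubgroup Λ) (hΛN : IsApproxSubgroup ΛN)
    (hconj : ∀ l ∈ Λ, SetCommensurable ((fun x => l * x * l⁻¹) '' ΛN) ΛN)
    (hunion : SetCommensurable (⋃ l ∈ Λ, (fun x => l * x * l⁻¹) '' ΛN) ΛN) :
    ∀ k : ℕ, 1 ≤ k →
      SetCommensurable (⋃ l ∈ Λ ^ k, (fun x => l * x * l⁻¹) '' ΛN) ΛN := by
  obtain ⟨hone, hinv, F0', hF0'fin, hF0'⟩ := hΛ
  obtain ⟨hNone, hNinv, FN, hFNfin, hFN⟩ := hΛN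
  obtain ⟨F0, hF0fin, hF0sub, _⟩ := hunion
  -- (A) every element of a power of Λ conjugates ΛN into ΛN * (finite set)
  have A : ∀ m : ℕ, ∀ γ ∈ Λ ^ m, ∃ C : Set G, C.Finite ∧
      ∀ n ∈ ΛN, γ * n * γ⁻¹ ∈ ΛN * C := by
    intro m
    induction m with
    | zero =>
      intro γ hγ
      rw [pow_zero] at hγ
      rw [Set.mem_one] at hγ
      subst hγ
      refine ⟨{1}, Set.finite_singleton 1, fun n hn => ?_⟩
      exact mem_mul_of_eq hn rfl (by group)
    | succ m ih =>
      intro γ hγ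
      rw [pow_succ] at hγ
      obtain ⟨δ, hδ, lam, hlam, rfl⟩ := hγ
      obtain ⟨Cδ, hCδfin, hCδ⟩ := ih δ hδ
      obtain ⟨CL, hCLfin, hCLsub, _⟩ := hconj lam hlam
      refine ⟨Cδ * ((fun x => δ * x * δ⁻¹) '' CL), hCδfin.mul (hCLfin.image _), ?_⟩
      intro n hn
      have h1 : lam * n * lam⁻¹ ∈ (CL * ΛN ∩ ΛN) * CL :=
        hCLsub (Set.mem_image_of_mem _ hn)
      obtain ⟨z, hz, c, hc, hzc⟩ := Set.mem_mul.mp h1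
      have hzN : z ∈ ΛN := ((Set.mem_inter_iff _ _ _).mp hz).2
      obtain ⟨z2, hz2, d, hd, hzd⟩ := Set.mem_mul.mp (hCδ z hzN)
      have key : (δ * lam) * n * (δ * lam)⁻¹ = z2 * (d * (δ * c * δ⁻¹)) := by
        have e1 : (δ * lam) * n * (δ * lam)⁻¹ = δ * (lam * n * lam⁻¹) * δ⁻¹ := by group
        rw [e1, ← hzc]
        have e2 : δ * (z * c) * δ⁻¹ = (δ * z * δ⁻¹) * (δ * c * δ⁻¹) := by group
        rw [e2, ← hzd]
        group
      show (δ * lam) * n * (δ * lam)⁻¹ ∈ _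
      rw [key]
      exact Set.mul_mem_mul hz2
        (Set.mul_mem_mul hd (Set.mem_image_of_mem _ hc))
  -- F1 : finite subset of Λ^3 with Λ * Λ ⊆ F1 * Λ
  set F1 : Set G := F0' ∩ (Λ * Λ * Λ) with hF1def
  have hF1fin : F1.Finite := hF0'fin.inter_of_left _
  have hF1 : Λ * Λ ⊆ F1 * Λ := by
    intro x hx
    obtain ⟨f, hf, l, hl, hfl⟩ := Set.mem_mul.mp (hF0' hx)
    have hlinv : l⁻¹ ∈ Λ := by rw [← hinv]; exact Set.inv_mem_inv.mpr hl
    have hfΛ : f ∈ Λ * Λ * Λ := by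
      have : f = x * l⁻¹ := by rw [← hfl]; group
      rw [this]; exact Set.mul_mem_mul hx hlinv
    exact mem_mul_of_eq (⟨hf, hfΛ⟩ : f ∈ F1) hl hfl.symm
  have hF1sub : F1 ⊆ Λ ^ 3 := by
    intro f hf
    have h3 : Λ ^ 3 = Λ * Λ * Λ := by rw [pow_succ, pow_succ, pow_one]
    rw [h3]; exact hf.2
  have hF1pow : ∀ j : ℕ, F1 ^ j ⊆ Λ ^ (3 * j) := by
    intro j
    induction j with
    | zero => simp
    | succ j ih =>
      rw [pow_succ, show 3 * (j + 1) = 3 * j + 3 by ring, pow_add]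
      exact Set.mul_subset_mul ih hF1sub
  -- Λ^(j+1) ⊆ F1^j * Λ
  have hE : ∀ j : ℕ, Λ ^ (j + 1) ⊆ F1 ^ j * Λ := by
    intro j
    induction j with
    | zero => rw [pow_one, pow_zero, one_mul]
    | succ j ih =>
      rw [pow_succ]
      calc Λ ^ (j + 1) * Λ ⊆ (F1 ^ j * Λ) * Λ := Set.mul_subset_mul_right ih
        _ = F1 ^ j * (Λ * Λ) := by rw [mul_assoc]
        _ ⊆ F1 ^ j * (F1 * Λ) := Set.mul_subset_mul_left hF1
        _ = F1 ^ (j + 1) * Λ := by rw [← mul_assoc, ← pow_succ]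
  have honepow : ∀ m : ℕ, (1 : G) ∈ Λ ^ m := by
    intro m
    induction m with
    | zero => rw [pow_zero]; exact Set.mem_one.mpr rfl
    | succ m ih =>
      rw [pow_succ]
      simpa using Set.mul_mem_mul ih hone
  intro k hk
  obtain ⟨j, rfl⟩ : ∃ j, k = j + 1 := ⟨k - 1, by omega⟩
  -- totalize A at level 3*j and choose
  have A' : ∀ γ : G, ∃ C : Set G, C.Finite ∧
      (γ ∈ Λ ^ (3 * j) → ∀ n ∈ ΛN, γ * n * γ⁻¹ ∈ ΛN * C) := by
    intro γ
    by_cases h : γ ∈ Λ ^ (3 * j)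
    · obtain ⟨C, hCfin, hC⟩ := A (3 * j) γ h
      exact ⟨C, hCfin, fun _ => hC⟩
    · exact ⟨∅, Set.finite_empty, fun h' => absurd h' h⟩
  choose C hCfin hC using A'
  set U : Set G := ⋃ l ∈ Λ ^ (j + 1), (fun x => l * x * l⁻¹) '' ΛN with hUdef
  set D : Set G := ⋃ f ∈ F1 ^ j, C f * ((fun x => f * x * f⁻¹) '' F0) with hDdef
  have hF1powfin : ∀ m : ℕ, (F1 ^ m : Set G).Finite := by
    intro m
    induction m with
    | zero => rw [pow_zero]; exact Set.finite_one
    | succ m ih => rw [pow_succ]; exact ih.mul hF1fin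
  have hDfin : D.Finite :=
    Set.Finite.biUnion (hF1powfin j) (fun f _ => (hCfin f).mul (hF0fin.image _))
  have hUD : U ⊆ ΛN * D := by
    intro x hx
    obtain ⟨l, hl, hx⟩ := Set.mem_iUnion₂.mp hx
    obtain ⟨n, hn, rfl⟩ := hx
    obtain ⟨f, hf, lam, hlam, hfl⟩ := Set.mem_mul.mp (hE j hl)
    have hW : lam * n * lam⁻¹ ∈ (F0 * ΛN ∩ ΛN) * F0 :=
      hF0sub (Set.mem_biUnion hlam (Set.mem_image_of_mem _ hn))
    obtain ⟨z, hz, g, hg, hzg⟩ := Set.mem_mul.mp hW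
    have hzN : z ∈ ΛN := ((Set.mem_inter_iff _ _ _).mp hz).2
    obtain ⟨z2, hz2, c, hc, hzc⟩ := Set.mem_mul.mp (hC f (hF1pow j hf) z hzN)
    have key : l * n * l⁻¹ = z2 * (c * (f * g * f⁻¹)) := by
      rw [← hfl]
      have e1 : (f * lam) * n * (f * lam)⁻¹ = f * (lam * n * lam⁻¹) * f⁻¹ := by group
      rw [e1, ← hzg]
      have e2 : f * (z * g) * f⁻¹ = (f * z * f⁻¹) * (f * g * f⁻¹) := by group
      rw [e2, ← hzc]
      group
    have hmemD : c * (f * g * f⁻¹) ∈ D :=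
      Set.mem_biUnion hf (Set.mul_mem_mul hc (Set.mem_image_of_mem _ hg))
    show l * n * l⁻¹ ∈ ΛN * D
    rw [key]
    exact Set.mul_mem_mul hz2 hmemD
  have hNU : ΛN ⊆ U := by
    intro n hn
    exact Set.mem_biUnion (honepow (j + 1)) ⟨n, hn, by simp⟩
  refine ⟨D ∪ {1}, hDfin.union (Set.finite_singleton 1), ?_, ?_⟩
  · intro x hx
    have hone' : (1 : G) ∈ D ∪ {1} := Set.mem_union_right _ rfl
    obtain ⟨m, hm, d, hd, hmd⟩ := Set.mem_mul.mp (hUD hx)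
    have hmint : m ∈ (D ∪ {1}) * ΛN ∩ ΛN :=
      Set.mem_inter (mem_mul_of_eq hone' hm (by rw [one_mul])) hm
    exact mem_mul_of_eq hmint (Set.mem_union_left _ hd) hmd.symm
  · intro n hn
    have hone' : (1 : G) ∈ D ∪ {1} := Set.mem_union_right _ rfl
    have hnint : n ∈ (D ∪ {1}) * U ∩ U :=
      Set.mem_inter (mem_mul_of_eq hone' (hNU hn) (by rw [one_mul])) (hNU hn)
    exact mem_mul_of_eq hnint hone' (by rw [mul_one])
end

section
/- Let G be a locally compact group, Λ ⊆ G an approximate lattice, N ⊴ G a closed normal subgroup, and p : G → G/N the quotient. If p(Λ) is an approximate lattice in G/N, then p(Λ) is uniformly discrete; conversely if p(Λ) is uniformly discrete then p(Λ²) is a uniformly discrete approximate subgroup of G/N. -/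
open Pointwise MeasureTheory

/-- A neighbourhood `V` of `1` with `v⁻¹ * w ∈ s` for `v, w ∈ V`. -/
lemma exists_nhds_inv_mul {Q : Type*} [Group Q] [TopologicalSpace Q] [IsTopologicalGroup Q]
    {s : Set Q} (hs : s ∈ nhds 1) :
    ∃ V ∈ nhds (1 : Q), ∀ v ∈ V, ∀ w ∈ V, v⁻¹ * w ∈ s := by
  have : (fun p : Q × Q => p.1⁻¹ * p.2) ⁻¹' s ∈ nhds ((1, 1) : Q × Q) :=
    (continuousAt_fst.inv.mul continuousAt_snd) (by simpa)
  simpa only [nhds_prod_eq, Filter.mem_prod_self_iff, Set.prod_subset_iff, Set.mem_preimage]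
    using this

/-- If `Y ⊆ E * X` with `E` finite and `X` uniformly discrete, and `1 ∈ Y`, then `1` is
isolated in `Y`. -/
lemma isolated_of_subset_finite_mul {Q : Type*} [Group Q] [TopologicalSpace Q]
    [IsTopologicalGroup Q] [T1Space Q] {X Y E : Set Q} (hE : E.Finite) (hY : Y ⊆ E * X)
    (h1 : (1 : Q) ∈ Y) {U : Set Q} (hU : U ∈ nhds 1) (hX : X⁻¹ * X ∩ U = {1}) :
    ∃ V ∈ nhds (1 : Q), Y ∩ V = {1} := by
  obtain ⟨V, hV, hVU⟩ := exists_nhds_inv_mul hU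
  -- each translate e * X meets V in at most one point
  have hsub : ∀ e : Q, ({y ∈ V | ∃ x ∈ X, e * x = y} : Set Q).Subsingleton := by
    intro e y₁ hy₁ y₂ hy₂
    obtain ⟨hy₁V, x₁, hx₁, hex₁⟩ := hy₁
    obtain ⟨hy₂V, x₂, hx₂, hex₂⟩ := hy₂
    have hmem : x₁⁻¹ * x₂ ∈ X⁻¹ * X ∩ U := by
      constructor
      · exact Set.mul_mem_mul (Set.inv_mem_inv.mpr hx₁) hx₂
      · have : y₁⁻¹ * y₂ ∈ U := hVU _ hy₁V _ hy₂V
        simpa [← hex₁, ← hex₂, mul_assoc] using this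
    rw [hX] at hmem
    have hx : x₁ = x₂ := by
      have := Set.mem_singleton_iff.mp hmem
      rw [inv_mul_eq_one] at this
      exact this
    rw [← hex₁, ← hex₂, hx]
  have hfin : (Y ∩ V).Finite := by
    refine Set.Finite.subset (hE.biUnion (fun e _ => (hsub e).finite)) ?_
    rintro y ⟨hyY, hyV⟩
    obtain ⟨e, he, x, hx, hex⟩ := hY hyY
    exact Set.mem_biUnion he ⟨hyV, x, hx, hex⟩
  set T : Set Q := (Y ∩ V) \ {1} with hT
  have hTfin : T.Finite := hfin.diff
  have hTc : IsClosed T := hTfin.isClosed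
  have h1T : (1 : Q) ∉ T := fun h => h.2 rfl
  refine ⟨V ∩ Tᶜ, Filter.inter_mem hV (hTc.isOpen_compl.mem_nhds h1T), ?_⟩
  ext y
  constructor
  · rintro ⟨hyY, hyV, hyT⟩
    by_contra hne
    exact hyT ⟨⟨hyY, hyV⟩, hne⟩
  · rintro rfl
    exact ⟨h1, mem_of_mem_nhds hV, h1T⟩

theorem stmt19 {G : Type*} [Group G] [TopologicalSpace G] [IsTopologicalGroup G]
    [LocallyCompactSpace G] [MeasurableSpace G] [BorelSpace G]
    (μG : Measure G) [μG.IsHaarMeasure]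
    (N : Subgroup G) [N.Normal] (hN : IsClosed (N : Set G))
    [MeasurableSpace (G ⧸ N)] [BorelSpace (G ⧸ N)]
    (μQ : Measure (G ⧸ N)) [μQ.IsHaarMeasure]
    (Λ : Set G) (hΛ : IsApproxLattice μG Λ) :
    (IsApproxLattice μQ ((QuotientGroup.mk : G → G ⧸ N) '' Λ) →
      UniformlyDiscrete ((QuotientGroup.mk : G → G ⧸ N) '' Λ)) ∧
    (UniformlyDiscrete ((QuotientGroup.mk : G → G ⧸ N) '' Λ) →
      IsApproxSubgroup ((QuotientGroup.mk : G → G ⧸ N) '' (Λ * Λ)) ∧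
        UniformlyDiscrete ((QuotientGroup.mk : G → G ⧸ N) '' (Λ * Λ))) := by
  haveI : T3Space (G ⧸ N) := QuotientGroup.instT3Space (hN := hN)
  obtain ⟨⟨h1, hinv, F, hFfin, hF⟩, -, -⟩ := hΛ
  set p : G →* G ⧸ N := QuotientGroup.mk' N with hp
  have hpcoe : (QuotientGroup.mk : G → G ⧸ N) = ⇑p := rfl
  -- basic combinatorics of approximate subgroups
  have hΛsub : Λ ⊆ Λ * Λ := fun x hx => ⟨x, hx, 1, h1, mul_one x⟩
  have hΛ3 : Λ * Λ * Λ ⊆ F * F * Λ := by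
    calc Λ * Λ * Λ ⊆ F * Λ * Λ := Set.mul_subset_mul_right hF
    _ = F * (Λ * Λ) := mul_assoc _ _ _
    _ ⊆ F * (F * Λ) := Set.mul_subset_mul_left hF
    _ = F * F * Λ := (mul_assoc _ _ _).symm
  have hΛ4 : Λ * Λ * (Λ * Λ) ⊆ F * F * F * Λ := by
    calc Λ * Λ * (Λ * Λ) = Λ * Λ * Λ * Λ := (mul_assoc _ _ _).symm
    _ ⊆ F * F * Λ * Λ := Set.mul_subset_mul_right hΛ3
    _ = F * F * (Λ * Λ) := mul_assoc _ _ _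
    _ ⊆ F * F * (F * Λ) := Set.mul_subset_mul_left hF
    _ = F * F * F * Λ := (mul_assoc _ _ _).symm
  constructor
  · exact fun h => h.2.1
  · rintro ⟨U, hU, hXU⟩
    rw [hpcoe] at hXU ⊢
    refine ⟨⟨?_, ?_, ?_⟩, ?_⟩
    · exact ⟨1, hΛsub h1, map_one p⟩
    · rw [← Set.image_inv p, mul_inv_rev, hinv]
    · refine ⟨p '' (F * F * F), (((hFfin.mul hFfin).mul hFfin).image p), ?_⟩
      rw [← Set.image_mul, ← Set.image_mul]
      exact Set.image_mono (f := p) (hΛ4.trans (Set.mul_subset_mul_left hΛsub))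
    · -- uniform discreteness of the image of Λ * Λ
      set Z : Set (G ⧸ N) := p '' (Λ * Λ) with hZ
      have hZinv : Z⁻¹ = Z := by
        rw [hZ, ← Set.image_inv p, mul_inv_rev, hinv]
      have hYsub : Z⁻¹ * Z ⊆ (p '' (F * F * F)) * (p '' Λ) := by
        rw [hZinv, hZ, ← Set.image_mul, ← Set.image_mul]
        exact Set.image_mono (f := p) hΛ4
      have h1Y : (1 : G ⧸ N) ∈ Z⁻¹ * Z := by
        have h1Z : (1 : G ⧸ N) ∈ Z := ⟨1, hΛsub h1, map_one p⟩
        simpa using Set.mul_mem_mul (Set.inv_mem_inv.mpr h1Z) h1Z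
      obtain ⟨V, hV, hVY⟩ := isolated_of_subset_finite_mul
        (((hFfin.mul hFfin).mul hFfin).image p) hYsub h1Y hU hXU
      exact ⟨V, hV, hVY⟩
end
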